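/- Let Ũ be a classical solution of the master equation. Fix t₀ ∈ [0,T] and μ₀ ∈ P([d]), and let μ̃ : [t₀,T] → P([d]) be the solution of the characteristics ODE d/dt μ̃_y(t) = Σ_x μ̃_x(t) a*_y(x, Δ_x Ũ(t,·,μ̃(t))) with μ̃(t₀) = μ₀. Define ũ(t,x) := Ũ(t,x,μ̃(t)). Then the pair (ũ,μ̃) is a solution of the MFG system (FB) started at (t₀,μ₀); in particular, −∂_t ũ(t,x) = H₁(x, Δ_x ũ(t,·)) + f₂(x, μ̃(t)) and ũ(T,x) = g(x, μ̃(T)). -/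

import Mathlib

noncomputable section

def eucNorm {d : ℕ} (v : Fin d → ℝ) : ℝ := Real.sqrt (∑ x, v x ^ 2)

def probSimplex (d : ℕ) : Set (Fin d → ℝ) := {η | (∀ x, 0 ≤ η x) ∧ ∑ x, η x = 1}

def deltaOp {d : ℕ} (x : Fin d) (φ : Fin d → ℝ) : Fin d → ℝ := fun l => φ l - φ x

def dotCLM {d : ℕ} (v : Fin d → ℝ) : (Fin d → ℝ) →L[ℝ] ℝ :=
  ∑ y, v y • ContinuousLinearMap.proj y

def ctrlSet (d : ℕ) (κ : ℝ) (x : Fin d) : Set (Fin d → ℝ) :=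
  {a | (∀ y, y ≠ x → κ ≤ a y) ∧ a x = -∑ y ∈ Finset.univ.erase x, a y}

def offSum {d : ℕ} (x : Fin d) (a p : Fin d → ℝ) : ℝ := ∑ y ∈ Finset.univ.erase x, a y * p y

/-- The reduced Hamiltonian `H₁(x,p)`, realized at the (assumed) minimizer `a*(x,p)`. -/
def H1fun {d : ℕ} (f₁ : Fin d → (Fin d → ℝ) → ℝ)
    (astar : Fin d → (Fin d → ℝ) → (Fin d → ℝ)) (x : Fin d) (p : Fin d → ℝ) : ℝ :=
  f₁ x (astar x p) + offSum x (astar x p) p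

/-- Assumption (A). -/
structure AssumptionA (d : ℕ) (T κ cL cV : ℝ)
    (f₁ f₂ g : Fin d → (Fin d → ℝ) → ℝ)
    (Df₁ Df₂ Dg : Fin d → (Fin d → ℝ) → (Fin d → ℝ))
    (astar : Fin d → (Fin d → ℝ) → (Fin d → ℝ)) : Prop where
  cL_pos : 0 < cL
  cV_pos : 0 < cV
  grad_f₂ : ∀ x, ∀ η ∈ probSimplex d,
    HasFDerivWithinAt (f₂ x) (dotCLM (Df₂ x η)) (probSimplex d) η
  grad_g : ∀ x, ∀ η ∈ probSimplex d,
    HasFDerivWithinAt (g x) (dotCLM (Dg x η)) (probSimplex d) η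
  lip_Df₂ : ∀ x, ∀ η ∈ probSimplex d, ∀ η' ∈ probSimplex d,
    eucNorm (Df₂ x η - Df₂ x η') ≤ cL * eucNorm (η - η')
  lip_Dg : ∀ x, ∀ η ∈ probSimplex d, ∀ η' ∈ probSimplex d,
    eucNorm (Dg x η - Dg x η') ≤ cL * eucNorm (η - η')
  grad_f₁ : ∀ x, ∀ a ∈ ctrlSet d κ x,
    HasFDerivWithinAt (f₁ x) (dotCLM (Df₁ x a)) (ctrlSet d κ x) a
  strong_convex : ∀ x, ∀ a ∈ ctrlSet d κ x, ∀ a' ∈ ctrlSet d κ x,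
    f₁ x a - f₁ x a' ≥ (∑ y, Df₁ x a' y * (a y - a' y)) + cV * eucNorm (a - a') ^ 2
  superlinear : ∀ (x : Fin d) (M : ℝ), ∃ R : ℝ, ∀ a ∈ ctrlSet d κ x,
    R ≤ eucNorm a → M ≤ f₁ x a / eucNorm a
  mono_g : ∀ η ∈ probSimplex d, ∀ η' ∈ probSimplex d,
    0 ≤ ∑ x, (η x - η' x) * (g x η - g x η')
  mono_f₂ : ∀ η ∈ probSimplex d, ∀ η' ∈ probSimplex d,
    cV * eucNorm (η - η') ^ 2 ≤ ∑ x, (η x - η' x) * (f₂ x η - f₂ x η')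
  astar_mem : ∀ x p, astar x p ∈ ctrlSet d κ x
  astar_min : ∀ x p, ∀ a ∈ ctrlSet d κ x,
    f₁ x (astar x p) + offSum x (astar x p) p ≤ f₁ x a + offSum x a p
  astar_uniq : ∀ x p, ∀ a ∈ ctrlSet d κ x,
    (∀ b ∈ ctrlSet d κ x, f₁ x a + offSum x a p ≤ f₁ x b + offSum x b p) → a = astar x p
  concave : ∀ M > (0:ℝ), ∃ cM > (0:ℝ), ∀ (x : Fin d) (p p' : Fin d → ℝ),
    (∀ y, |p y| ≤ M) → (∀ y, |p' y| ≤ M) →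
    H1fun f₁ astar x p - H1fun f₁ astar x p' - ∑ y, astar x p' y * (p y - p' y)
      ≤ -cM * eucNorm (p - p') ^ 2

/-- A solution of the MFG forward-backward system (FB) started at `(t₀, μ₀)`. -/
def IsFBSol (d : ℕ) (T : ℝ) (f₁ f₂ g : Fin d → (Fin d → ℝ) → ℝ)
    (astar : Fin d → (Fin d → ℝ) → (Fin d → ℝ))
    (t₀ : ℝ) (μ₀ : Fin d → ℝ) (u : ℝ → Fin d → ℝ) (μ : ℝ → Fin d → ℝ) : Prop :=
  (∀ t ∈ Set.Icc t₀ T, μ t ∈ probSimplex d) ∧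
  (∀ y, ∀ t ∈ Set.Icc t₀ T,
    HasDerivWithinAt (fun s => μ s y)
      (∑ x, μ t x * astar x (deltaOp x (u t)) y) (Set.Icc t₀ T) t) ∧
  (∀ x, ∀ t ∈ Set.Icc t₀ T,
    HasDerivWithinAt (fun s => u s x)
      (-(H1fun f₁ astar x (deltaOp x (u t)) + f₂ x (μ t))) (Set.Icc t₀ T) t) ∧
  μ t₀ = μ₀ ∧ (∀ x, u T x = g x (μ T))

/-- A solution of the linearized system (LIN) associated with `(u, μ)`, on `[t₀, T]`
(the initial condition for `m` is stated separately). -/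
def IsLINSol (d : ℕ) (T : ℝ)
    (Df₂ Dg : Fin d → (Fin d → ℝ) → (Fin d → ℝ))
    (astar : Fin d → (Fin d → ℝ) → (Fin d → ℝ))
    (t₀ : ℝ) (u μ : ℝ → Fin d → ℝ) (v m : ℝ → Fin d → ℝ) : Prop :=
  (∀ y, ∀ t ∈ Set.Icc t₀ T,
    HasDerivWithinAt (fun s => m s y)
      (∑ x, m t x * astar x (deltaOp x (u t)) y) (Set.Icc t₀ T) t) ∧
  (∀ x, ∀ t ∈ Set.Icc t₀ T,
    HasDerivWithinAt (fun s => v s x)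
      (-((∑ y, v t y * astar x (deltaOp x (u t)) y) + ∑ y, Df₂ x (μ t) y * m t y))
      (Set.Icc t₀ T) t) ∧
  (∀ x, v T x = ∑ y, Dg x (μ T) y * m T y)

/-- A classical solution of the master equation (ME): `U` differentiable in `t` and
continuously differentiable in `η` (with measure-gradient `DU`), satisfying the equation
and the terminal condition. -/
def IsMESol (d : ℕ) (T : ℝ) (f₁ f₂ g : Fin d → (Fin d → ℝ) → ℝ)
    (astar : Fin d → (Fin d → ℝ) → (Fin d → ℝ))
    (U : ℝ → Fin d → (Fin d → ℝ) → ℝ)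
    (DU : ℝ → Fin d → (Fin d → ℝ) → (Fin d → ℝ)) : Prop :=
  (∀ x : Fin d, ∀ t ∈ Set.Icc (0:ℝ) T, ∀ η ∈ probSimplex d,
    HasFDerivWithinAt (fun η' => U t x η') (dotCLM (DU t x η)) (probSimplex d) η) ∧
  (∀ x : Fin d, ContinuousOn (fun q : ℝ × (Fin d → ℝ) => DU q.1 x q.2)
    (Set.Icc (0:ℝ) T ×ˢ probSimplex d)) ∧
  (∀ x : Fin d, ∀ t ∈ Set.Icc (0:ℝ) T, ∀ η ∈ probSimplex d,
    HasDerivWithinAt (fun s => U s x η)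
      (-((∑ y, ∑ z, DU t x η z * (η y * astar y (deltaOp y (fun l => U t l η)) z))
          + H1fun f₁ astar x (deltaOp x (fun l => U t l η)) + f₂ x η))
      (Set.Icc (0:ℝ) T) t) ∧
  (∀ x : Fin d, ∀ η ∈ probSimplex d, U T x η = g x η)


open Asymptotics in
lemma dotCLM_apply' {d : ℕ} (v h : Fin d → ℝ) : dotCLM v h = ∑ y, v y * h y := by
  simp [dotCLM]

lemma dotCLM_sub' {d : ℕ} (v w : Fin d → ℝ) : dotCLM (v - w) = dotCLM v - dotCLM w := by
  ext h
  simp [dotCLM_apply', sub_mul, Finset.sum_sub_distrib]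

lemma norm_dotCLM_le' {d : ℕ} (v : Fin d → ℝ) : ‖dotCLM v‖ ≤ d * ‖v‖ := by
  apply ContinuousLinearMap.opNorm_le_bound
  · positivity
  · intro h
    rw [dotCLM_apply']
    calc ‖∑ y, v y * h y‖ ≤ ∑ y : Fin d, ‖v y * h y‖ := norm_sum_le _ _
    _ ≤ ∑ _y : Fin d, ‖v‖ * ‖h‖ := by
        refine Finset.sum_le_sum fun y _ => ?_
        rw [norm_mul]
        exact mul_le_mul (norm_le_pi_norm v y) (norm_le_pi_norm h y) (norm_nonneg _)
          (norm_nonneg _)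
    _ = d * ‖v‖ * ‖h‖ := by simp [Finset.sum_const, mul_assoc]

lemma convex_probSimplex' (d : ℕ) : Convex ℝ (probSimplex d) := by
  intro a ha b hb s t hs ht hst
  constructor
  · intro x
    have h1 := ha.1 x; have h2 := hb.1 x
    have : 0 ≤ s * a x + t * b x := by positivity
    simpa using this
  · simp only [Pi.add_apply, Pi.smul_apply, smul_eq_mul, Finset.sum_add_distrib,
      ← Finset.mul_sum, ha.2, hb.2]
    simpa using hst

open Asymptotics in
lemma chain_rule_master {d : ℕ} (hd : 0 < d) {T t₀ : ℝ}
    (U : ℝ → (Fin d → ℝ) → ℝ) (DU : ℝ → (Fin d → ℝ) → (Fin d → ℝ))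
    (hgrad : ∀ t ∈ Set.Icc (0:ℝ) T, ∀ η ∈ probSimplex d,
      HasFDerivWithinAt (U t) (dotCLM (DU t η)) (probSimplex d) η)
    (hcont : ContinuousOn (fun q : ℝ × (Fin d → ℝ) => DU q.1 q.2)
      (Set.Icc (0:ℝ) T ×ˢ probSimplex d))
    (μt : ℝ → Fin d → ℝ) (hsub : Set.Icc t₀ T ⊆ Set.Icc 0 T)
    (hsimplex : ∀ s ∈ Set.Icc t₀ T, μt s ∈ probSimplex d)
    {t : ℝ} (ht : t ∈ Set.Icc t₀ T)
    {V : Fin d → ℝ} (hμ : HasDerivWithinAt μt V (Set.Icc t₀ T) t)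
    {A : ℝ} (hUt : HasDerivWithinAt (fun s => U s (μt t)) A (Set.Icc t₀ T) t) :
    HasDerivWithinAt (fun s => U s (μt s)) (A + dotCLM (DU t (μt t)) V) (Set.Icc t₀ T) t := by
  set S := Set.Icc t₀ T with hS
  set η := μt t with hηdef
  set L := dotCLM (DU t η) with hL
  have hη : η ∈ probSimplex d := hsimplex t ht
  have htT : t ∈ Set.Icc 0 T := hsub ht
  have h1 : (fun s => U s η - U t η - (s - t) • A) =o[nhdsWithin t S] fun s => s - t :=
    hasDerivWithinAt_iff_isLittleO.1 hUt
  have h3 : (fun s => L (μt s) - L η - (s - t) • (L V)) =o[nhdsWithin t S] fun s => s - t :=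
    hasDerivWithinAt_iff_isLittleO.1 ((L.hasFDerivAt).comp_hasDerivWithinAt t hμ)
  have h2 : (fun s => U s (μt s) - U s η - L (μt s - η)) =o[nhdsWithin t S] fun s => s - t := by
    rw [Asymptotics.isLittleO_iff]
    intro c hc
    set C0 : ℝ := ‖V‖ + 1 with hC0
    have hC0pos : 0 < C0 := by positivity
    have hdpos : (0:ℝ) < d := by exact_mod_cast hd
    set ε : ℝ := c / (d * C0) with hε
    have hεpos : 0 < ε := by positivity
    have hcw : ContinuousWithinAt (fun q : ℝ × (Fin d → ℝ) => DU q.1 q.2)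
        (Set.Icc (0:ℝ) T ×ˢ probSimplex d) (t, η) := hcont (t, η) ⟨htT, hη⟩
    obtain ⟨δ, hδpos, hδ⟩ := Metric.continuousWithinAt_iff.1 hcw ε hεpos
    have E1 : ∀ᶠ s in nhdsWithin t S, ‖μt s - η‖ ≤ C0 * ‖s - t‖ := by
      filter_upwards [(hasDerivWithinAt_iff_isLittleO.1 hμ).def one_pos] with s hs
      calc ‖μt s - η‖ = ‖(μt s - η - (s - t) • V) + (s - t) • V‖ := by abel_nf
      _ ≤ ‖μt s - η - (s - t) • V‖ + ‖(s - t) • V‖ := norm_add_le _ _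
      _ ≤ 1 * ‖s - t‖ + ‖s - t‖ * ‖V‖ := by
          rw [norm_smul]; exact add_le_add hs le_rfl
      _ = C0 * ‖s - t‖ := by rw [hC0]; ring
    have hrpos : 0 < min δ (δ / C0) := lt_min hδpos (by positivity)
    have E2 : ∀ᶠ s in nhdsWithin t S, dist s t < min δ (δ / C0) :=
      Filter.eventually_iff_exists_mem.2 ⟨Metric.ball t (min δ (δ / C0)),
        nhdsWithin_le_nhds (Metric.ball_mem_nhds t hrpos), fun s hs => Metric.mem_ball.1 hs⟩
    have E3 : ∀ᶠ s in nhdsWithin t S, s ∈ S := eventually_mem_nhdsWithin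
    filter_upwards [E1, E2, E3] with s hs1 hs2 hs3
    have hμs : μt s ∈ probSimplex d := hsimplex s hs3
    have hsT : s ∈ Set.Icc 0 T := hsub hs3
    have hnd : ‖s - t‖ = dist s t := by rw [Real.dist_eq, Real.norm_eq_abs]
    have hdist : ‖μt s - η‖ < δ := by
      calc ‖μt s - η‖ ≤ C0 * ‖s - t‖ := hs1
      _ < C0 * (δ / C0) := by
          rw [hnd]
          exact mul_lt_mul_of_pos_left (lt_of_lt_of_le hs2 (min_le_right _ _)) hC0pos
      _ = δ := by field_simp
    set K := probSimplex d ∩ Metric.ball η δ with hK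
    have hKconv : Convex ℝ K := (convex_probSimplex' d).inter (convex_ball η δ)
    have hKη : η ∈ K := ⟨hη, Metric.mem_ball_self hδpos⟩
    have hKμs : μt s ∈ K := ⟨hμs, by rw [Metric.mem_ball, dist_eq_norm]; exact hdist⟩
    have hD : ∀ c' ∈ K, HasFDerivWithinAt (U s) (dotCLM (DU s c')) K c' :=
      fun c' hc' => (hgrad s hsT c' hc'.1).mono Set.inter_subset_left
    have hB : ∀ c' ∈ K, ‖dotCLM (DU s c') - L‖ ≤ d * ε := by
      intro c' hc'
      rw [hL, ← dotCLM_sub']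
      refine le_trans (norm_dotCLM_le' _) ?_
      have hmem : (s, c') ∈ Set.Icc (0:ℝ) T ×ˢ probSimplex d := ⟨hsT, hc'.1⟩
      have hdd : dist (s, c') (t, η) < δ := by
        rw [Prod.dist_eq]
        exact max_lt (lt_of_lt_of_le hs2 (min_le_left _ _)) (Metric.mem_ball.1 hc'.2)
      have hlt := hδ hmem hdd
      rw [← dist_eq_norm]
      exact mul_le_mul_of_nonneg_left hlt.le hdpos.le
    have key := hKconv.norm_image_sub_le_of_norm_hasFDerivWithin_le' hD hB hKη hKμs
    calc ‖U s (μt s) - U s η - L (μt s - η)‖ ≤ (d * ε) * ‖μt s - η‖ := key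
    _ ≤ (d * ε) * (C0 * ‖s - t‖) := by
        refine mul_le_mul_of_nonneg_left hs1 ?_
        positivity
    _ = c * ‖s - t‖ := by rw [hε]; field_simp
  have hsum := (h1.add h2).add h3
  rw [hasDerivWithinAt_iff_isLittleO]
  refine hsum.congr' (Filter.Eventually.of_forall fun s => ?_) (Filter.EventuallyEq.refl _ _)
  simp only [map_sub, smul_add]
  ring

/-- given a classical solution `Ũ` of the master equation and the solution
`μ̃` of the characteristics ODE started at `(t₀,μ₀)`, the pair `(ũ,μ̃)` with
`ũ(t,x) := Ũ(t,x,μ̃(t))` solves the MFG system (FB) started at `(t₀,μ₀)`. -/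
theorem master_equation_characteristics
    (d : ℕ) (hd : 2 ≤ d) (T κ : ℝ) (hT : 0 < T) (hκ : 0 < κ)
    (f₁ f₂ g : Fin d → (Fin d → ℝ) → ℝ)
    (Df₂ Dg : Fin d → (Fin d → ℝ) → (Fin d → ℝ))
    (astar : Fin d → (Fin d → ℝ) → (Fin d → ℝ))
    -- differentiability of f₂ and g on the simplex
    (hDf₂ : ∀ x, ∀ η ∈ probSimplex d,
      HasFDerivWithinAt (f₂ x) (dotCLM (Df₂ x η)) (probSimplex d) η)
    (hDg : ∀ x, ∀ η ∈ probSimplex d,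
      HasFDerivWithinAt (g x) (dotCLM (Dg x η)) (probSimplex d) η)
    -- H₁ is attained at the unique point a*(x,p), and a* is continuous
    (hmem : ∀ x p, astar x p ∈ ctrlSet d κ x)
    (hmin : ∀ x p, ∀ a ∈ ctrlSet d κ x,
      f₁ x (astar x p) + offSum x (astar x p) p ≤ f₁ x a + offSum x a p)
    (huniq : ∀ x p, ∀ a ∈ ctrlSet d κ x,
      (∀ b ∈ ctrlSet d κ x, f₁ x a + offSum x a p ≤ f₁ x b + offSum x b p) → a = astar x p)
    (hacont : ∀ x, Continuous (astar x))
    -- Ũ is a classical solution of the master equation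
    (Ut : ℝ → Fin d → (Fin d → ℝ) → ℝ)
    (DUt : ℝ → Fin d → (Fin d → ℝ) → (Fin d → ℝ))
    (hME : IsMESol d T f₁ f₂ g astar Ut DUt)
    -- μ̃ solves the characteristics ODE started at (t₀,μ₀)
    (t₀ : ℝ) (ht₀ : t₀ ∈ Set.Icc (0:ℝ) T)
    (μ₀ : Fin d → ℝ) (hμ₀ : μ₀ ∈ probSimplex d)
    (μt : ℝ → Fin d → ℝ)
    (hsimplex : ∀ t ∈ Set.Icc t₀ T, μt t ∈ probSimplex d)
    (hODE : ∀ y, ∀ t ∈ Set.Icc t₀ T,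
      HasDerivWithinAt (fun s => μt s y)
        (∑ x, μt t x * astar x (deltaOp x (fun l => Ut t l (μt t))) y) (Set.Icc t₀ T) t)
    (hinit : μt t₀ = μ₀) :
    IsFBSol d T f₁ f₂ g astar t₀ μ₀ (fun t x => Ut t x (μt t)) μt := by
  obtain ⟨hgrad, hcontDU, htime, hterm⟩ := hME
  have hsub : Set.Icc t₀ T ⊆ Set.Icc (0:ℝ) T := Set.Icc_subset_Icc ht₀.1 le_rfl
  have hdpos : 0 < d := by omega
  refine ⟨hsimplex, fun y t ht => hODE y t ht, ?_, hinit,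
    fun x => hterm x (μt T) (hsimplex T ⟨ht₀.2, le_rfl⟩)⟩
  intro x t ht
  set V : Fin d → ℝ :=
    fun z => ∑ y, μt t y * astar y (deltaOp y (fun l => Ut t l (μt t))) z with hV
  have hμ : HasDerivWithinAt μt V (Set.Icc t₀ T) t :=
    hasDerivWithinAt_pi.2 (fun z => hODE z t ht)
  have hUt := (htime x t (hsub ht) (μt t) (hsimplex t ht)).mono hsub
  have hchain := chain_rule_master hdpos (fun s => Ut s x) (fun s => DUt s x)
    (fun t ht' η hη => hgrad x t ht' η hη) (hcontDU x) μt hsub hsimplex ht hμ hUt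
  have hLV : dotCLM (DUt t x (μt t)) V
      = ∑ y, ∑ z, DUt t x (μt t) z *
          (μt t y * astar y (deltaOp y (fun l => Ut t l (μt t))) z) := by
    rw [dotCLM_apply']
    simp only [hV, Finset.mul_sum]
    rw [Finset.sum_comm]
  rw [hLV] at hchain
  show HasDerivWithinAt (fun s => Ut s x (μt s))
    (-(H1fun f₁ astar x (deltaOp x (fun l => Ut t l (μt t))) + f₂ x (μt t)))
    (Set.Icc t₀ T) t
  convert hchain using 1
  ring
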